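/- Let G be a finite abelian group with Sylow p-subgroup G_p, and let π: Z_p[G] -> Z_p[G_p] be the map induced by the projection G -> G_p. Write I and I_p for the augmentation ideals of Z_p[G] and Z_p[G_p] respectively. Then for every r ≥ 1, π induces an isomorphism I^r/I^{r+1} ≃ I_p^r/I_p^{r+1}. -/

import Mathlib

/-- The augmentation map `R[G] → R` sending every group element to `1`. -/
noncomputable def aug (R : Type*) [CommRing R] (G : Type*) [CommGroup G] :
    MonoidAlgebra R G →+* R :=
  ((MonoidAlgebra.lift R R G) 1).toRingHom

/-- The augmentation ideal of `R[G]`. -/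
noncomputable def augIdeal (R : Type*) [CommRing R] (G : Type*) [CommGroup G] :
    Ideal (MonoidAlgebra R G) :=
  RingHom.ker (aug R G)

lemma aug_single {R : Type*} [CommRing R] {G : Type*} [CommGroup G] (a : G) (b : R) :
    aug R G (MonoidAlgebra.single a b) = b := by
  simp [aug, MonoidAlgebra.lift_single]

lemma isUnit_natCast_padic {p : ℕ} [Fact p.Prime] {N : ℕ} (h : ¬ p ∣ N) :
    IsUnit (N : ℤ_[p]) := by
  rw [PadicInt.isUnit_iff]
  have hle : ‖(N : ℤ_[p])‖ ≤ 1 := PadicInt.norm_le_one _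
  have hlt := PadicInt.norm_int_lt_one_iff_dvd (p := p) (N : ℤ)
  push_cast at hlt
  have : ¬ ‖(N : ℤ_[p])‖ < 1 := by
    rw [hlt]
    exact_mod_cast fun hd => h (Int.ofNat_dvd.mp (by exact_mod_cast hd))
  linarith [lt_or_eq_of_le hle |>.resolve_left this]

lemma key_nil {A : Type*} [CommRing A] (y : A) (hy : IsNilpotent y) (N : ℕ)
    (hN : IsUnit (N : A)) (h1 : (y + 1) ^ N = 1) : y = 0 := by
  rcases N with _ | M
  · have h0 : (0 : A) = 1 := isUnit_zero_iff.mp (by simpa using hN)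
    have := subsingleton_of_zero_eq_one h0
    exact Subsingleton.elim _ _
  · have expand : (y + 1) ^ (M + 1)
        = ∑ k ∈ Finset.range (M + 2), y ^ k * (Nat.choose (M + 1) k : A) := by
      rw [add_pow]; simp
    rw [expand, Finset.sum_range_succ'] at h1
    simp only [pow_zero, Nat.choose_zero_right, Nat.cast_one, mul_one, one_mul] at h1
    have h2 : ∑ k ∈ Finset.range (M + 1), y ^ (k + 1) * (Nat.choose (M + 1) (k + 1) : A) = 0 := by
      linear_combination h1
    rw [Finset.sum_range_succ'] at h2
    simp only [zero_add, pow_one, Nat.choose_one_right] at h2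
    set S : A := ∑ k ∈ Finset.range M, y ^ k * (Nat.choose (M + 1) (k + 2) : A) with hS
    have h3 : ∑ k ∈ Finset.range M, y ^ (k + 1 + 1) * (Nat.choose (M + 1) (k + 1 + 1) : A)
        = y * (y * S) := by
      rw [hS, Finset.mul_sum, Finset.mul_sum]
      refine Finset.sum_congr rfl fun k _ => by ring
    rw [h3] at h2
    have h4 : y * (y * S + ((M + 1 : ℕ) : A)) = 0 := by push_cast at h2 ⊢; linear_combination h2
    have hnil : IsNilpotent (y * S) := by
      obtain ⟨n, hn⟩ := hy
      exact ⟨n, by rw [mul_pow, hn, zero_mul]⟩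
    have hu : IsUnit (y * S + ((M + 1 : ℕ) : A)) :=
      hnil.isUnit_add_right_of_commute hN (Commute.all _ _)
    exact (hu.mul_left_eq_zero).mp h4

lemma of_sub_one_mem_pow {p : ℕ} [Fact p.Prime] (Gp H : Type*) [CommGroup Gp] [CommGroup H]
    [Fintype H] (hH : ¬ p ∣ Fintype.card H) (h : H) (n : ℕ) :
    MonoidAlgebra.of ℤ_[p] (Gp × H) ((1 : Gp), h) - 1 ∈ augIdeal ℤ_[p] (Gp × H) ^ n := by
  rw [← Ideal.Quotient.eq_zero_iff_mem]
  set q := Ideal.Quotient.mk (augIdeal ℤ_[p] (Gp × H) ^ n) with hq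
  have hmem : MonoidAlgebra.of ℤ_[p] (Gp × H) ((1 : Gp), h) - 1 ∈ augIdeal ℤ_[p] (Gp × H) := by
    simp only [augIdeal, RingHom.mem_ker, map_sub, map_one]
    rw [MonoidAlgebra.of_apply, aug_single, sub_self]
  apply key_nil _ ?_ (Fintype.card H) ?_ ?_
  · exact ⟨n, by rw [← map_pow, hq, Ideal.Quotient.eq_zero_iff_mem]; exact Ideal.pow_mem_pow hmem n⟩
  · have := (isUnit_natCast_padic hH).map
      (q.comp (algebraMap ℤ_[p] (MonoidAlgebra ℤ_[p] (Gp × H))))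
    rwa [map_natCast] at this
  · have h2 : q (MonoidAlgebra.of ℤ_[p] (Gp × H) ((1 : Gp), h) - 1) + 1
        = q (MonoidAlgebra.of ℤ_[p] (Gp × H) ((1 : Gp), h)) := by
      rw [map_sub, map_one, sub_add_cancel]
    rw [h2, ← map_pow, ← map_pow]
    have h3 : ((1 : Gp), h) ^ Fintype.card H = 1 := by
      rw [Prod.pow_mk, one_pow, pow_card_eq_one]
      rfl
    rw [h3, map_one, map_one]

/-- Let `G = Gp × H` be a finite abelian group with `Gp` its Sylow `p`-subgroup (a
`p`-group) and `H` of order prime to `p`.  Let `π : ℤ_p[G] → ℤ_p[Gp]` be induced by the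
projection `G → Gp`.  Then for every `r ≥ 1`, `π` induces an isomorphism
`I^r/I^{r+1} ≃ I_p^r/I_p^{r+1}`, where `I` and `I_p` are the augmentation ideals of
`ℤ_p[G]` and `ℤ_p[Gp]`, and the quotients are realized as images in `ℤ_p[−]/I^{r+1}`. -/
theorem stmt5 (p : ℕ) [Fact p.Prime] (Gp H : Type*) [CommGroup Gp] [CommGroup H]
    [Fintype Gp] [Fintype H] (hGp : IsPGroup p Gp) (hH : ¬ p ∣ Fintype.card H)
    (r : ℕ) (hr : 1 ≤ r) :
    ∃ e : ((augIdeal ℤ_[p] (Gp × H) ^ r).map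
            (Ideal.Quotient.mk (augIdeal ℤ_[p] (Gp × H) ^ (r + 1)))) ≃+
          ((augIdeal ℤ_[p] Gp ^ r).map
            (Ideal.Quotient.mk (augIdeal ℤ_[p] Gp ^ (r + 1)))),
      ∀ (x : MonoidAlgebra ℤ_[p] (Gp × H)) (hx : x ∈ augIdeal ℤ_[p] (Gp × H) ^ r),
        (e ⟨Ideal.Quotient.mk _ x, Ideal.mem_map_of_mem _ hx⟩ :
            MonoidAlgebra ℤ_[p] Gp ⧸ augIdeal ℤ_[p] Gp ^ (r + 1))
          = Ideal.Quotient.mk _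
              (MonoidAlgebra.mapDomainRingHom ℤ_[p] (MonoidHom.fst Gp H) x) := by
  classical
  set π := MonoidAlgebra.mapDomainRingHom ℤ_[p] (MonoidHom.fst Gp H) with hπd
  set σ := MonoidAlgebra.mapDomainRingHom ℤ_[p] (MonoidHom.inl Gp H) with hσd
  have hπs : ∀ (a : Gp × H) (b : ℤ_[p]),
      π (MonoidAlgebra.single a b) = MonoidAlgebra.single a.1 b := by
    intro a b
    simp [hπd, Finsupp.mapDomain_single]
  have hσs : ∀ (a : Gp) (b : ℤ_[p]),
      σ (MonoidAlgebra.single a b) = MonoidAlgebra.single (a, (1 : H)) b := by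
    intro a b
    simp [hσd, Finsupp.mapDomain_single]
  have hπσ : ∀ y, π (σ y) = y := by
    intro y
    induction y using MonoidAlgebra.induction_linear with
    | zero => simp
    | add f g hf hg => rw [map_add, map_add, hf, hg]
    | single a b => rw [hσs, hπs]
  have haug : ∀ x, aug ℤ_[p] Gp (π x) = aug ℤ_[p] (Gp × H) x := by
    intro x
    induction x using MonoidAlgebra.induction_linear with
    | zero => simp
    | add f g hf hg => rw [map_add, map_add, map_add, hf, hg]
    | single a b => rw [hπs, aug_single, aug_single]
  have hI : Ideal.map π (augIdeal ℤ_[p] (Gp × H)) = augIdeal ℤ_[p] Gp := by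
    apply le_antisymm
    · rw [Ideal.map_le_iff_le_comap]
      intro x hx
      simp only [augIdeal, Ideal.mem_comap, RingHom.mem_ker] at *
      rw [haug]; exact hx
    · intro y hy
      simp only [augIdeal, RingHom.mem_ker] at hy
      have h1 : σ y ∈ augIdeal ℤ_[p] (Gp × H) := by
        simp only [augIdeal, RingHom.mem_ker]
        rw [← haug, hπσ]; exact hy
      have := Ideal.mem_map_of_mem π h1
      rwa [hπσ] at this
  set T : Ideal (MonoidAlgebra ℤ_[p] (Gp × H)) :=
    Ideal.span {z | ∃ h : H, z = MonoidAlgebra.of ℤ_[p] (Gp × H) ((1 : Gp), h) - 1} with hT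
  have hTle : ∀ m, T ≤ augIdeal ℤ_[p] (Gp × H) ^ m := by
    intro m
    rw [hT, Ideal.span_le]
    rintro z ⟨h, rfl⟩
    exact of_sub_one_mem_pow Gp H hH h m
  have hdiff : ∀ x, x - σ (π x) ∈ T := by
    intro x
    induction x using MonoidAlgebra.induction_linear with
    | zero => simp
    | add f g hf hg =>
      simpa only [map_add, add_sub_add_comm] using T.add_mem hf hg
    | single a b =>
      rw [hπs, hσs]
      have heq : MonoidAlgebra.single a b - MonoidAlgebra.single (a.1, (1 : H)) b
          = MonoidAlgebra.single (a.1, (1 : H)) b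
              * (MonoidAlgebra.of ℤ_[p] (Gp × H) ((1 : Gp), a.2) - 1) := by
        rw [mul_sub, mul_one, MonoidAlgebra.of_apply, MonoidAlgebra.single_mul_single]
        simp
      rw [heq]
      exact Ideal.mul_mem_left _ _ (Ideal.subset_span ⟨a.2, rfl⟩)
  have hker : ∀ m, RingHom.ker π ≤ augIdeal ℤ_[p] (Gp × H) ^ m := by
    intro m x hx
    rw [RingHom.mem_ker] at hx
    have h2 := hdiff x
    rw [hx, map_zero, sub_zero] at h2
    exact hTle m h2
  have hsurj : Function.Surjective π := fun y => ⟨σ y, hπσ y⟩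
  set I1 := augIdeal ℤ_[p] (Gp × H) ^ (r + 1) with hI1
  set J1 := augIdeal ℤ_[p] Gp ^ (r + 1) with hJ1
  have hmapI1 : Ideal.map π I1 = J1 := by rw [hI1, hJ1, Ideal.map_pow, hI]
  have hf0 : ∀ a ∈ I1, ((Ideal.Quotient.mk J1).comp π) a = 0 := by
    intro a ha
    simp only [RingHom.comp_apply]
    rw [Ideal.Quotient.eq_zero_iff_mem, ← hmapI1]
    exact Ideal.mem_map_of_mem π ha
  set φ := Ideal.Quotient.lift I1 ((Ideal.Quotient.mk J1).comp π) hf0 with hφ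
  have hφmk : ∀ x, φ (Ideal.Quotient.mk I1 x) = Ideal.Quotient.mk J1 (π x) := by
    intro x
    rw [hφ, Ideal.Quotient.lift_mk, RingHom.comp_apply]
  have hφsurj : Function.Surjective φ := by
    intro b
    obtain ⟨y, rfl⟩ := Ideal.Quotient.mk_surjective b
    obtain ⟨x, rfl⟩ := hsurj y
    exact ⟨Ideal.Quotient.mk I1 x, hφmk x⟩
  have hφinj : Function.Injective φ := by
    apply RingHom.lift_injective_of_ker_le_ideal
    intro x hx
    rw [RingHom.mem_ker, RingHom.comp_apply, Ideal.Quotient.eq_zero_iff_mem, ← hmapI1] at hx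
    have hx2 : x ∈ Ideal.comap π (Ideal.map π I1) := hx
    rw [Ideal.comap_map_of_surjective π hsurj I1] at hx2
    exact (sup_le le_rfl (hker (r + 1))) hx2
  set e0 := RingEquiv.ofBijective φ ⟨hφinj, hφsurj⟩ with he0
  set M := Ideal.map (Ideal.Quotient.mk I1) (augIdeal ℤ_[p] (Gp × H) ^ r) with hM
  set N := Ideal.map (Ideal.Quotient.mk J1) (augIdeal ℤ_[p] Gp ^ r) with hN
  have hcompφ : φ.comp (Ideal.Quotient.mk I1) = (Ideal.Quotient.mk J1).comp π :=
    RingHom.ext fun x => by rw [RingHom.comp_apply, hφmk, RingHom.comp_apply]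
  have hmapM : Ideal.map φ M = N := by
    rw [hM, Ideal.map_map, hcompφ, ← Ideal.map_map, Ideal.map_pow, hI, hN]
  have hfw : ∀ z ∈ M, φ z ∈ N := fun z hz => hmapM ▸ Ideal.mem_map_of_mem φ hz
  have hbw : ∀ w ∈ N, e0.symm w ∈ M := by
    intro w hw
    rw [← hmapM, Ideal.mem_map_iff_of_surjective φ hφsurj] at hw
    obtain ⟨z, hz, rfl⟩ := hw
    have h3 : e0.symm (φ z) = z := e0.symm_apply_apply z
    rwa [h3]
  refine ⟨{
      toFun := fun z => ⟨φ z.1, hfw z.1 z.2⟩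
      invFun := fun w => ⟨e0.symm w.1, hbw w.1 w.2⟩
      left_inv := fun z => Subtype.ext (e0.symm_apply_apply z.1)
      right_inv := fun w => Subtype.ext (e0.apply_symm_apply w.1)
      map_add' := fun z w => Subtype.ext (map_add φ z.1 w.1) }, ?_⟩
  intro x hx
  exact hφmk x
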